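/- Let (ℓ, ℓ′) be a Lagrangian frame in (ℝ^{2n}, ω) and let X_ℓ ⊆ ℓ be a centered ellipsoid in ℓ, i.e. X_ℓ = {z ∈ ℓ : q(z) ≤ ħ} for some positive definite quadratic form q on ℓ. Let (X_ℓ)_{ℓ′}^ħ = {z′ ∈ ℓ′ : sup_{z∈X_ℓ} ω(z, z′) ≤ ħ} be its Lagrangian polar dual, and let K = X_ℓ + (X_ℓ)_{ℓ′}^ħ = {z + z′ : z ∈ X_ℓ, z′ ∈ (X_ℓ)_{ℓ′}^ħ} (the product of the two ellipsoids under the splitting ℝ^{2n} = ℓ ⊕ ℓ′). Then there exists S ∈ Sp(n) such that the quantum blob S(B^{2n}(√ħ)) is contained in K, and every centered ellipsoid E = {z ∈ ℝ^{2n} : Qz·z ≤ ħ} (Q symmetric positive definite) contained in K has Lebesgue measure at most that of B^{2n}(√ħ). -/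

import Mathlib

open Matrix ComplexOrder MeasureTheory Pointwise

noncomputable section

/-- Phase space ℝ^{2n} ≃ ℝⁿ × ℝⁿ, with coordinates z = (x,p). -/
abbrev PS (n : ℕ) := Fin n ⊕ Fin n → ℝ

/-- The standard symplectic matrix J = [[0, I], [-I, 0]]. -/
def Jmat (n : ℕ) : Matrix (Fin n ⊕ Fin n) (Fin n ⊕ Fin n) ℝ :=
  Matrix.fromBlocks 0 1 (-1) 0

/-- The standard symplectic form ω(z,z′) = (Jz)·z′. -/
def symp (n : ℕ) (z z' : PS n) : ℝ := (Jmat n).mulVec z ⬝ᵥ z'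

/-- The symplectic group Sp(n) = {S : SᵀJS = J}. -/
def Sp (n : ℕ) : Set (Matrix (Fin n ⊕ Fin n) (Fin n ⊕ Fin n) ℝ) :=
  {S | Sᵀ * Jmat n * S = Jmat n}

/-- Symplectic ℏ-polar dual Ω^{ℏ,ω} = {z′ : sup_{z∈Ω} ω(z,z′) ≤ ℏ}. -/
def sympDual (n : ℕ) (ℏ : ℝ) (Ω : Set (PS n)) : Set (PS n) :=
  {z' | ∀ z ∈ Ω, symp n z z' ≤ ℏ}

/-- The closed Euclidean ball B^{2n}(√ℏ) of radius √ℏ centered at 0. -/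
def ball2n (n : ℕ) (ℏ : ℝ) : Set (PS n) := {z | z ⬝ᵥ z ≤ ℏ}

/-- The covariance ellipsoid Ω_Σ = {z : (1/2)Σ⁻¹z·z ≤ 1}. -/
def covEll (n : ℕ) (Sig : Matrix (Fin n ⊕ Fin n) (Fin n ⊕ Fin n) ℝ) : Set (PS n) :=
  {z | (1 / 2 : ℝ) * (Sig⁻¹.mulVec z ⬝ᵥ z) ≤ 1}
/-- A Lagrangian subspace: an n-dimensional subspace on which ω vanishes identically. -/
def IsLagrangian (n : ℕ) (ℓ : Submodule ℝ (PS n)) : Prop :=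
  Module.finrank ℝ ℓ = n ∧ ∀ z ∈ ℓ, ∀ z' ∈ ℓ, symp n z z' = 0
/-- Lagrangian polar dual (X)_{ℓ′}^ℏ = {z′ ∈ ℓ′ : sup_{z∈X} ω(z,z′) ≤ ℏ}. -/
def lagDual (n : ℕ) (ℏ : ℝ) (ℓ' : Submodule ℝ (PS n)) (X : Set (PS n)) : Set (PS n) :=
  {z' | z' ∈ ℓ' ∧ ∀ z ∈ X, symp n z z' ≤ ℏ}

namespace JohnAux

/-- symp as a bilinear map. -/
def sympB (n : ℕ) : PS n →ₗ[ℝ] PS n →ₗ[ℝ] ℝ :=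
  LinearMap.mk₂ ℝ (symp n)
    (fun z z' w => by simp [symp, Matrix.mulVec_add, add_dotProduct])
    (fun c z w => by simp [symp, Matrix.mulVec_smul, smul_dotProduct])
    (fun z w w' => by simp [symp, dotProduct_add])
    (fun c z w => by simp [symp, dotProduct_smul])

@[simp] lemma sympB_apply (n : ℕ) (z z' : PS n) : sympB n z z' = symp n z z' := rfl

lemma Jmat_mul_Jmat (n : ℕ) : Jmat n * Jmat n = -1 := by
  have : (-1 : Matrix (Fin n ⊕ Fin n) (Fin n ⊕ Fin n) ℝ) = Matrix.fromBlocks (-1) 0 0 (-1) := by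
    rw [← Matrix.fromBlocks_one, Matrix.fromBlocks_neg]
    simp
  rw [this]
  simp [Jmat, Matrix.fromBlocks_multiply]

lemma isUnit_det_Jmat (n : ℕ) : IsUnit (Jmat n).det := by
  refine IsUnit.of_mul_eq_one (-(Jmat n)).det ?_
  rw [← Matrix.det_mul]
  rw [Matrix.mul_neg, Jmat_mul_Jmat, neg_neg, Matrix.det_one]

lemma Jmat_mulVec (n : ℕ) (z : PS n) :
    Jmat n *ᵥ z = Sum.elim (fun i => z (Sum.inr i)) (fun i => -z (Sum.inl i)) := by
  funext k
  cases k with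
  | inl i =>
    simp [Jmat, Matrix.mulVec, dotProduct, Fintype.sum_sum_type,
      Matrix.one_apply, Finset.sum_ite_eq]
  | inr i =>
    simp [Jmat, Matrix.mulVec, dotProduct, Fintype.sum_sum_type,
      Matrix.one_apply, Finset.sum_ite_eq]

lemma symp_eq_sum (n : ℕ) (z z' : PS n) :
    symp n z z' = ∑ i, z (Sum.inr i) * z' (Sum.inl i) - ∑ i, z (Sum.inl i) * z' (Sum.inr i) := by
  rw [symp, Jmat_mulVec, dotProduct, Fintype.sum_sum_type]
  simp [sub_eq_add_neg, ← Finset.sum_neg_distrib]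

lemma symp_antisymm (n : ℕ) (z z' : PS n) : symp n z z' = - symp n z' z := by
  rw [symp_eq_sum, symp_eq_sum]
  simp only [mul_comm]
  ring

lemma entry_transpose_J_mul (n : ℕ) (S : Matrix (Fin n ⊕ Fin n) (Fin n ⊕ Fin n) ℝ)
    (k l : Fin n ⊕ Fin n) :
    (Sᵀ * Jmat n * S) k l = symp n (fun a => S a l) (fun a => S a k) := by
  rw [Matrix.mul_assoc, Matrix.mul_apply]
  simp only [Matrix.transpose_apply, Matrix.mul_apply]
  rw [symp]
  simp only [Matrix.mulVec, dotProduct]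
  exact Finset.sum_congr rfl (fun a _ => mul_comm _ _)

lemma exists_qbasis {n : ℕ} (ℓ : Submodule ℝ (PS n)) (hrank : Module.finrank ℝ ℓ = n)
    (q : QuadraticForm ℝ ℓ) (hq : q.PosDef) :
    ∃ e : Module.Basis (Fin n) ℝ ℓ, ∀ x : Fin n → ℝ, q (∑ i, x i • e i) = ∑ i, (x i) ^ 2 := by
  classical
  set B : LinearMap.BilinForm ℝ ℓ := QuadraticMap.associated (R := ℝ) q with hB
  have hsymm : LinearMap.IsSymm B := ⟨fun x y => QuadraticMap.associated_isSymm ℝ q x y⟩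
  obtain ⟨v0, hv0⟩ := LinearMap.BilinForm.exists_orthogonal_basis hsymm
  let v : Module.Basis (Fin n) ℝ ℓ := v0.reindex (finCongr hrank)
  have hv : ∀ i j, i ≠ j → B (v i) (v j) = 0 := by
    intro i j hij
    have hne : Fin.cast hrank.symm i ≠ Fin.cast hrank.symm j :=
      (Fin.cast_injective _).ne hij
    simpa [v, Module.Basis.reindex_apply] using hv0 hne
  have hBv : ∀ w : ℓ, B w w = q w := fun w => q.associated_eq_self_apply ℝ w
  have hqv : ∀ i, 0 < q (v i) := fun i => hq (v i) (v.ne_zero i)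
  have hw : ∀ i : Fin n, IsUnit ((Real.sqrt (q (v i)))⁻¹) := by
    intro i
    exact (Units.mk0 _ (inv_ne_zero (Real.sqrt_ne_zero'.mpr (hqv i)))).isUnit
  let e : Module.Basis (Fin n) ℝ ℓ := v.isUnitSMul hw
  have he : ∀ i, (e i : ℓ) = (Real.sqrt (q (v i)))⁻¹ • v i := fun i =>
    Module.Basis.isUnitSMul_apply hw i
  have hBee : ∀ i j, B (e i) (e j) = if i = j then 1 else 0 := by
    intro i j
    rw [he, he, LinearMap.BilinForm.smul_left, LinearMap.BilinForm.smul_right]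
    by_cases hij : i = j
    · subst hij
      rw [if_pos rfl, hBv]
      have hs : Real.sqrt (q (v i)) * Real.sqrt (q (v i)) = q (v i) :=
        Real.mul_self_sqrt (hqv i).le
      rw [← hs]
      have hs0 : Real.sqrt (q (v i)) ≠ 0 := ne_of_gt (Real.sqrt_pos.mpr (hqv i))
      field_simp
      rw [Real.sqrt_sq (Real.sqrt_nonneg _)]
    · rw [if_neg hij, hv i j hij]
      ring
  refine ⟨e, fun x => ?_⟩
  calc q (∑ i, x i • e i) = B (∑ i, x i • e i) (∑ j, x j • e j) := (hBv _).symm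
  _ = ∑ i, ∑ j, x i * (x j * B (e i) (e j)) := by
      rw [LinearMap.BilinForm.sum_left]
      refine Finset.sum_congr rfl fun i _ => ?_
      rw [LinearMap.BilinForm.smul_left, LinearMap.BilinForm.sum_right, Finset.mul_sum]
      refine Finset.sum_congr rfl fun j _ => ?_
      rw [LinearMap.BilinForm.smul_right]
  _ = ∑ i, x i ^ 2 := by
      refine Finset.sum_congr rfl fun i _ => ?_
      rw [Finset.sum_eq_single i (fun j _ hji => by rw [hBee, if_neg (Ne.symm hji)]; ring)
        (fun h => absurd (Finset.mem_univ i) h)]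
      rw [hBee, if_pos rfl]; ring

lemma sup_eq_top {n : ℕ} (ℓ ℓ' : Submodule ℝ (PS n))
    (hℓ : IsLagrangian n ℓ) (hℓ' : IsLagrangian n ℓ') (htrans : ℓ ⊓ ℓ' = ⊥) :
    ℓ ⊔ ℓ' = ⊤ := by
  apply Submodule.eq_top_of_finrank_eq
  have h1 := Submodule.finrank_sup_add_finrank_inf_eq ℓ ℓ'
  rw [htrans] at h1
  have h2 : Module.finrank ℝ (PS n) = n + n := by
    rw [Module.finrank_pi]
    simp
  simp only [finrank_bot, add_zero] at h1
  rw [h2, h1, hℓ.1, hℓ'.1]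

lemma exists_dual_basis {n : ℕ} (ℓ ℓ' : Submodule ℝ (PS n))
    (hℓ : IsLagrangian n ℓ) (hℓ' : IsLagrangian n ℓ') (htrans : ℓ ⊓ ℓ' = ⊥)
    (e : Module.Basis (Fin n) ℝ ℓ) :
    ∃ f : Module.Basis (Fin n) ℝ ℓ', ∀ (i j : Fin n),
      symp n (e i : PS n) (f j : PS n) = if i = j then -1 else 0 := by
  classical
  have hsup := sup_eq_top ℓ ℓ' hℓ hℓ' htrans
  -- nondegeneracy
  have key : ∀ w : ℓ', (∀ i, symp n (e i : PS n) (w : PS n) = 0) → w = 0 := by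
    intro w hw
    have hl : ∀ a ∈ ℓ, symp n a (w : PS n) = 0 := by
      intro a ha
      have hrepr : (⟨a, ha⟩ : ℓ) = ∑ i, e.repr ⟨a, ha⟩ i • e i := (e.sum_repr ⟨a, ha⟩).symm
      have hcoe : a = ∑ i, e.repr ⟨a, ha⟩ i • (e i : PS n) := by
        have := congrArg (Submodule.subtype ℓ) hrepr
        simpa only [map_sum, map_smul, Submodule.subtype_apply] using this
      rw [hcoe]
      have : sympB n (∑ i, e.repr ⟨a, ha⟩ i • (e i : PS n)) (w : PS n) = 0 := by
        rw [map_sum, LinearMap.sum_apply]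
        refine Finset.sum_eq_zero fun i _ => ?_
        rw [_root_.map_smul, LinearMap.smul_apply, sympB_apply, hw i, smul_zero]
      exact this
    have hall : ∀ z : PS n, symp n z (w : PS n) = 0 := by
      intro z
      have hz : z ∈ ℓ ⊔ ℓ' := by rw [hsup]; trivial
      obtain ⟨a, ha, b, hb, rfl⟩ := Submodule.mem_sup.mp hz
      have h1 : symp n a (w : PS n) = 0 := hl a ha
      have h2 : symp n b (w : PS n) = 0 := hℓ'.2 b hb _ w.2
      have : sympB n (a + b) (w : PS n) = 0 := by
        rw [map_add, LinearMap.add_apply, sympB_apply, sympB_apply, h1, h2, add_zero]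
      exact this
    have hdot : ∀ u : PS n, u ⬝ᵥ (w : PS n) = 0 := by
      intro u
      have := hall (-(Jmat n *ᵥ u))
      rw [symp, Matrix.mulVec_neg, Matrix.mulVec_mulVec, Jmat_mul_Jmat] at this
      simpa [Matrix.neg_mulVec, neg_dotProduct] using this
    have : (w : PS n) = 0 := by
      have := hdot (w : PS n)
      exact (dotProduct_self_eq_zero).mp this
    exact Subtype.ext this
  -- the pairing map
  let L : ℓ' →ₗ[ℝ] (Fin n → ℝ) :=
    LinearMap.pi fun i => -((sympB n (e i : PS n)).comp ℓ'.subtype)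
  have hL : ∀ (w : ℓ') (i : Fin n), L w i = - symp n (e i : PS n) (w : PS n) := by
    intro w i; rfl
  have hinj : Function.Injective L := by
    rw [← LinearMap.ker_eq_bot]
    rw [Submodule.eq_bot_iff]
    intro w hw
    rw [LinearMap.mem_ker] at hw
    apply key
    intro i
    have := congrFun (congrArg (fun g : Fin n → ℝ => g) hw) i
    have h2 : L w i = 0 := by rw [hw]; rfl
    rw [hL] at h2
    linarith
  have hfr : Module.finrank ℝ ℓ' = Module.finrank ℝ (Fin n → ℝ) := by
    rw [hℓ'.1, Module.finrank_pi]
    simp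
  let equiv := LinearMap.linearEquivOfInjective L hinj hfr
  have hequiv : ∀ w : ℓ', (equiv w : Fin n → ℝ) = L w := fun w => rfl
  let f : Module.Basis (Fin n) ℝ ℓ' := (Pi.basisFun ℝ (Fin n)).map equiv.symm
  refine ⟨f, fun i j => ?_⟩
  have hfj : equiv (f j) = Pi.single j 1 := by
    simp [f, Module.Basis.map_apply, Pi.basisFun_apply]
  have : L (f j) = Pi.single j 1 := by rw [← hequiv, hfj]
  have h3 := congrFun this i
  rw [hL] at h3
  rw [Pi.single_apply] at h3
  by_cases hij : i = j
  · rw [if_pos hij]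
    rw [if_pos hij] at h3
    linarith
  · rw [if_neg hij]
    rw [if_neg hij] at h3
    linarith

def colMat {n : ℕ} (col : Fin n ⊕ Fin n → PS n) : Matrix (Fin n ⊕ Fin n) (Fin n ⊕ Fin n) ℝ :=
  Matrix.of fun k l => col l k

lemma colMat_mulVec {n : ℕ} (col : Fin n ⊕ Fin n → PS n) (z : PS n) :
    colMat col *ᵥ z = ∑ l, z l • col l := by
  funext k
  rw [Matrix.mulVec, dotProduct, Finset.sum_apply]
  refine Finset.sum_congr rfl fun l _ => ?_
  simp [colMat, mul_comm]

lemma colMat_mem_Sp {n : ℕ} (col : Fin n ⊕ Fin n → PS n)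
    (h : ∀ k l, symp n (col l) (col k) = Jmat n k l) : colMat col ∈ Sp n := by
  show _ = _
  ext k l
  rw [entry_transpose_J_mul]
  exact h k l

lemma det_le_one_of_diag_le_one {d : Type*} [Fintype d] [DecidableEq d]
    (N : Matrix d d ℝ) (hN : N.PosDef) (h : ∀ k, N k k ≤ 1) : N.det ≤ 1 := by
  rcases isEmpty_or_nonempty d with hd | hd
  · simp [Matrix.det_isEmpty]
  set lam := hN.1.eigenvalues with hlam
  have hpos : ∀ k, 0 < lam k := hN.eigenvalues_pos
  have hdet : N.det = ∏ k, lam k := by simpa using hN.1.det_eq_prod_eigenvalues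
  set c : ℝ := (Fintype.card d : ℝ) with hc
  have hc0 : c ≠ 0 := Nat.cast_ne_zero.mpr Fintype.card_ne_zero
  have hcpos : 0 < c := by
    have h0 : (0:ℝ) < (Fintype.card d : ℝ) := by exact_mod_cast Fintype.card_pos
    simpa [hc] using h0
  have htr : ∑ k, lam k = N.trace := by
    have hst := hN.1.spectral_theorem
    set U : Matrix d d ℝ := (hN.1.eigenvectorUnitary : Matrix d d ℝ) with hU
    have hUU : star U * U = 1 := Matrix.mem_unitaryGroup_iff'.mp hN.1.eigenvectorUnitary.2
    calc ∑ k, lam k = (Matrix.diagonal (RCLike.ofReal ∘ lam)).trace := by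
          simp [Matrix.trace_diagonal]
    _ = (star U * U * Matrix.diagonal (RCLike.ofReal ∘ lam)).trace := by rw [hUU, one_mul]
    _ = (U * Matrix.diagonal (RCLike.ofReal ∘ lam) * star U).trace :=
          (Matrix.trace_mul_cycle U (Matrix.diagonal (RCLike.ofReal ∘ lam)) (star U)).symm
    _ = N.trace := by rw [hst, Unitary.conjStarAlgAut_apply]
  have htrace_le : N.trace ≤ c := by
    rw [Matrix.trace]
    calc ∑ k, N.diag k ≤ ∑ _k : d, (1 : ℝ) := Finset.sum_le_sum fun k _ => h k
    _ = c := by simp [hc]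
  have hgm := Real.geom_mean_le_arith_mean_weighted Finset.univ (fun _ => 1 / c) lam
    (fun i _ => by positivity) (by rw [Finset.sum_const, Finset.card_univ, nsmul_eq_mul, mul_one_div, div_self hc0]) (fun i _ => (hpos i).le)
  have hle1 : ∏ k, (lam k) ^ ((1 : ℝ) / c) ≤ 1 := by
    refine hgm.trans ?_
    have : ∑ i, 1 / c * lam i = (1 / c) * ∑ i, lam i := by rw [Finset.mul_sum]
    rw [this, htr]
    rw [div_mul_eq_mul_div, one_mul, div_le_one hcpos]
    exact htrace_le
  have hprod : ∀ k, ((lam k) ^ ((1 : ℝ) / c)) ^ (Fintype.card d) = lam k := by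
    intro k
    rw [← Real.rpow_natCast ((lam k) ^ ((1 : ℝ) / c)) (Fintype.card d),
      ← Real.rpow_mul (hpos k).le, one_div, inv_mul_cancel₀ hc0, Real.rpow_one]
  calc N.det = ∏ k, lam k := hdet
  _ = (∏ k, (lam k) ^ ((1 : ℝ) / c)) ^ (Fintype.card d) := by
      rw [← Finset.prod_pow]
      exact Finset.prod_congr rfl fun k _ => (hprod k).symm
  _ ≤ 1 ^ (Fintype.card d) := by
      apply pow_le_pow_left₀ (Finset.prod_nonneg fun k _ => Real.rpow_nonneg (hpos k).le _) hle1
  _ = 1 := one_pow _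

open scoped MatrixOrder in
lemma volume_ellipsoid_le {n : ℕ} (ℏ : ℝ)
    (Q : Matrix (Fin n ⊕ Fin n) (Fin n ⊕ Fin n) ℝ) (hQ : Q.PosDef) (hdet : 1 ≤ Q.det) :
    volume {z : PS n | Q.mulVec z ⬝ᵥ z ≤ ℏ} ≤ volume (ball2n n ℏ) := by
  classical
  set R := CFC.sqrt Q with hRdef
  have hRR : R * R = Q := CFC.sqrt_mul_sqrt_self Q hQ.posSemidef.nonneg
  have hRsymm : Rᵀ = R := by
    have h1 := (CFC.sqrt_nonneg Q).posSemidef.1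
    rwa [Matrix.IsHermitian, Matrix.conjTranspose_eq_transpose_of_trivial] at h1
  have hdetR : 0 ≤ R.det := by
    have hherm := (CFC.sqrt_nonneg Q).posSemidef.1
    have h2 : R.det = ∏ i, hherm.eigenvalues i := by simpa using hherm.det_eq_prod_eigenvalues
    rw [h2]
    exact Finset.prod_nonneg fun i _ => (CFC.sqrt_nonneg Q).posSemidef.eigenvalues_nonneg i
  have hdetRR : R.det * R.det = Q.det := by rw [← Matrix.det_mul, hRR]
  have hdetR1 : 1 ≤ R.det := by nlinarith
  have hRunit : IsUnit R.det := (by linarith : (0:ℝ) < R.det).ne'.isUnit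
  have hvm : ∀ x : PS n, x ᵥ* R = R *ᵥ x := by
    intro x
    rw [← hRsymm, Matrix.vecMul_transpose, hRsymm]
  have key : ∀ u v : PS n, (R *ᵥ u) ⬝ᵥ (R *ᵥ v) = (Q *ᵥ u) ⬝ᵥ v := by
    intro u v
    rw [Matrix.dotProduct_mulVec, hvm, Matrix.mulVec_mulVec, hRR]
  have himg : {z : PS n | Q.mulVec z ⬝ᵥ z ≤ ℏ} = (Matrix.toLin' R⁻¹) '' ball2n n ℏ := by
    ext z
    constructor
    · intro hz
      refine ⟨R *ᵥ z, ?_, ?_⟩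
      · show (R *ᵥ z) ⬝ᵥ (R *ᵥ z) ≤ ℏ
        rw [key]
        exact hz
      · show R⁻¹ *ᵥ (R *ᵥ z) = z
        rw [Matrix.mulVec_mulVec, Matrix.nonsing_inv_mul R hRunit, Matrix.one_mulVec]
    · rintro ⟨u, hu, rfl⟩
      show Q *ᵥ (Matrix.toLin' R⁻¹ u) ⬝ᵥ _ ≤ ℏ
      have hru : R *ᵥ (Matrix.toLin' R⁻¹ u) = u := by
        show R *ᵥ (R⁻¹ *ᵥ u) = u
        rw [Matrix.mulVec_mulVec, Matrix.mul_nonsing_inv R hRunit, Matrix.one_mulVec]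
      rw [← key, hru]
      exact hu
  rw [himg, MeasureTheory.Measure.addHaar_image_linearMap (μ := volume) (Matrix.toLin' R⁻¹)]
  calc ENNReal.ofReal |LinearMap.det (Matrix.toLin' R⁻¹)| * volume (ball2n n ℏ)
      ≤ 1 * volume (ball2n n ℏ) := by
        refine mul_le_mul_of_nonneg_right ?_ (by simp)
        apply ENNReal.ofReal_le_one.mpr
        rw [LinearMap.det_toLin', Matrix.det_nonsing_inv, Ring.inverse_eq_inv]
        rw [abs_of_nonneg (inv_nonneg.mpr hdetR)]
        exact inv_le_one_of_one_le₀ hdetR1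
  _ = volume (ball2n n ℏ) := one_mul _

lemma symp_sum_sum {n : ℕ} (E F : Fin n → PS n)
    (hEF : ∀ i j, symp n (E i) (F j) = if i = j then -1 else 0) (y p : Fin n → ℝ) :
    symp n (∑ i, y i • E i) (∑ j, p j • F j) = - ∑ i, y i * p i := by
  have h : sympB n (∑ i, y i • E i) (∑ j, p j • F j)
      = ∑ i, ∑ j, y i * (p j * symp n (E i) (F j)) := by
    simp only [map_sum, LinearMap.sum_apply, _root_.map_smul, LinearMap.smul_apply,
      smul_eq_mul, Finset.mul_sum, sympB_apply]
    rw [Finset.sum_comm]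
    exact Finset.sum_congr rfl fun i _ => Finset.sum_congr rfl fun j _ => by ring
  rw [← sympB_apply, h, ← Finset.sum_neg_distrib]
  refine Finset.sum_congr rfl fun i _ => ?_
  rw [Finset.sum_eq_single i]
  · rw [hEF, if_pos rfl]; ring
  · intro j _ hji; rw [hEF, if_neg (Ne.symm hji)]; ring
  · intro hmem; exact absurd (Finset.mem_univ i) hmem

end JohnAux

open JohnAux in
/-- The convex set K = X_ℓ + (X_ℓ)_{ℓ′}^ℏ contains a quantum blob, and any centered
ellipsoid contained in K has volume at most that of B^{2n}(√ℏ) (so a quantum blob is a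
John ellipsoid of K). -/
theorem john_ellipsoid_of_lagrangian_product (n : ℕ) (ℏ : ℝ) (hℏ : 0 < ℏ)
    (ℓ ℓ' : Submodule ℝ (PS n))
    (hℓ : IsLagrangian n ℓ) (hℓ' : IsLagrangian n ℓ') (htrans : ℓ ⊓ ℓ' = ⊥)
    (Xl : Set (PS n))
    (hXl : ∃ q : QuadraticForm ℝ ℓ, q.PosDef ∧
      Xl = ((↑) : ℓ → PS n) '' {v : ℓ | q v ≤ ℏ}) :
    (∃ S ∈ Sp n, S.mulVec '' ball2n n ℏ ⊆ Xl + lagDual n ℏ ℓ' Xl) ∧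
    (∀ Q : Matrix (Fin n ⊕ Fin n) (Fin n ⊕ Fin n) ℝ, Q.PosDef →
      {z : PS n | Q.mulVec z ⬝ᵥ z ≤ ℏ} ⊆ Xl + lagDual n ℏ ℓ' Xl →
      volume {z : PS n | Q.mulVec z ⬝ᵥ z ≤ ℏ} ≤ volume (ball2n n ℏ)) := by
  classical
  obtain ⟨q, hqpos, hXlq⟩ := hXl
  obtain ⟨e, he⟩ := exists_qbasis ℓ hℓ.1 q hqpos
  obtain ⟨f, hf⟩ := exists_dual_basis ℓ ℓ' hℓ hℓ' htrans e
  set E : Fin n → PS n := fun i => (e i : PS n) with hE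
  set F : Fin n → PS n := fun j => (f j : PS n) with hF
  set S := colMat (Sum.elim E F) with hSdef
  have hEE : ∀ i i', symp n (E i) (E i') = 0 := fun i i' => hℓ.2 _ (e i).2 _ (e i').2
  have hFF : ∀ j j', symp n (F j) (F j') = 0 := fun j j' => hℓ'.2 _ (f j).2 _ (f j').2
  have hEF : ∀ i j, symp n (E i) (F j) = if i = j then -1 else 0 := hf
  -- coercion of sums
  have hcoeE : ∀ c : Fin n → ℝ, ((∑ i, c i • e i : ℓ) : PS n) = ∑ i, c i • E i := by
    intro c
    show ℓ.subtype _ = _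
    rw [map_sum]
    exact Finset.sum_congr rfl fun i _ => by simp [hE]
  have hcoeF : ∀ c : Fin n → ℝ, ((∑ j, c j • f j : ℓ') : PS n) = ∑ j, c j • F j := by
    intro c
    show ℓ'.subtype _ = _
    rw [map_sum]
    exact Finset.sum_congr rfl fun j _ => by simp [hF]
  -- S is symplectic
  have hSp : S ∈ Sp n := by
    apply colMat_mem_Sp
    intro k l
    cases k with
    | inl i =>
      cases l with
      | inl i' =>
        show symp n (E i') (E i) = Jmat n (Sum.inl i) (Sum.inl i')
        rw [hEE]
        simp [Jmat]
      | inr j =>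
        show symp n (F j) (E i) = Jmat n (Sum.inl i) (Sum.inr j)
        rw [symp_antisymm, hEF]
        by_cases h : i = j <;> simp [h, Jmat, Matrix.one_apply]
    | inr j =>
      cases l with
      | inl i =>
        show symp n (E i) (F j) = Jmat n (Sum.inr j) (Sum.inl i)
        rw [hEF]
        by_cases h : i = j
        · subst h; simp [Jmat, Matrix.one_apply]
        · simp [h, Jmat, Matrix.one_apply, Ne.symm h]
      | inr j' =>
        show symp n (F j') (F j) = Jmat n (Sum.inr j) (Sum.inr j')
        rw [hFF]
        simp [Jmat]
  -- mulVec splitting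
  have hmulVec : ∀ z : PS n,
      S *ᵥ z = (∑ i, z (Sum.inl i) • E i) + (∑ j, z (Sum.inr j) • F j) := by
    intro z
    rw [hSdef, colMat_mulVec, Fintype.sum_sum_type]
    rfl
  -- membership of sums
  have hXmem : ∀ y : Fin n → ℝ, (∑ i, (y i)^2 ≤ ℏ) → (∑ i, y i • E i) ∈ Xl := by
    intro y hy
    rw [hXlq]
    exact ⟨∑ i, y i • e i, by rw [Set.mem_setOf_eq, he]; exact hy, hcoeE y⟩
  -- description of Xl elements
  have hXdesc : ∀ a ∈ Xl, ∃ y : Fin n → ℝ, (∑ i, (y i)^2 ≤ ℏ) ∧ a = ∑ i, y i • E i := by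
    intro a ha
    rw [hXlq] at ha
    obtain ⟨w, hw, rfl⟩ := ha
    refine ⟨e.repr w, ?_, ?_⟩
    · rw [← he]
      rw [← e.sum_repr w] at hw
      exact hw
    · rw [← hcoeE]
      congr 1
      exact (e.sum_repr w).symm
  -- Cauchy-Schwarz bound
  have hCS : ∀ y p : Fin n → ℝ, (∑ i, (y i)^2 ≤ ℏ) → (∑ j, (p j)^2 ≤ ℏ) →
      - ∑ i, y i * p i ≤ ℏ := by
    intro y p hy hp
    have hy0 : (0:ℝ) ≤ ∑ i, (y i)^2 := Finset.sum_nonneg fun i _ => sq_nonneg _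
    have hp0 : (0:ℝ) ≤ ∑ j, (p j)^2 := Finset.sum_nonneg fun j _ => sq_nonneg _
    have hcs : (∑ i, y i * p i)^2 ≤ (∑ i, (y i)^2) * (∑ i, (p i)^2) := by
      have := Finset.sum_mul_sq_le_sq_mul_sq Finset.univ y p
      simpa [pow_two] using this
    have hb : (- ∑ i, y i * p i)^2 ≤ ℏ^2 := by
      rw [neg_pow]
      nlinarith
    have h1 := Real.sqrt_le_sqrt hb
    rw [Real.sqrt_sq_eq_abs, Real.sqrt_sq hℏ.le] at h1
    exact (le_abs_self _).trans h1
  -- membership in the dual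
  have hFdual : ∀ p : Fin n → ℝ, (∑ j, (p j)^2 ≤ ℏ) →
      (∑ j, p j • F j) ∈ lagDual n ℏ ℓ' Xl := by
    intro p hp
    constructor
    · rw [← hcoeF]
      exact (∑ j, p j • f j).2
    · intro a ha
      obtain ⟨y, hy, rfl⟩ := hXdesc a ha
      rw [symp_sum_sum E F hEF]
      exact hCS y p hy hp
  refine ⟨⟨S, hSp, ?_⟩, ?_⟩
  · -- quantum blob inside K
    rintro w ⟨z, hz, rfl⟩
    have hz' : (∑ i, (z (Sum.inl i))^2) + (∑ j, (z (Sum.inr j))^2) ≤ ℏ := by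
      have : z ⬝ᵥ z ≤ ℏ := hz
      rw [dotProduct, Fintype.sum_sum_type] at this
      simpa [pow_two] using this
    have hx0 : (0:ℝ) ≤ ∑ i, (z (Sum.inl i))^2 := Finset.sum_nonneg fun i _ => sq_nonneg _
    have hp0 : (0:ℝ) ≤ ∑ j, (z (Sum.inr j))^2 := Finset.sum_nonneg fun j _ => sq_nonneg _
    rw [hmulVec z]
    exact Set.add_mem_add (hXmem _ (by linarith)) (hFdual _ (by linarith))
  · -- volume bound
    intro Q hQ hsub
    set M := Sᵀ * Q * S with hM
    -- determinant facts for S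
    have hJ0 : (Jmat n).det ≠ 0 := (isUnit_det_Jmat n).ne_zero
    have hdetS : S.det * S.det = 1 := by
      have h1 : Sᵀ * Jmat n * S = Jmat n := hSp
      have h2 := congrArg Matrix.det h1
      rw [Matrix.det_mul, Matrix.det_mul, Matrix.det_transpose] at h2
      have h3 : (S.det * S.det) * (Jmat n).det = 1 * (Jmat n).det := by
        rw [one_mul]; nlinarith [h2]
      exact mul_right_cancel₀ hJ0 h3
    have hSunit : IsUnit S :=
      (Matrix.isUnit_iff_isUnit_det S).mpr (IsUnit.of_mul_eq_one _ hdetS)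
    have hSinj : Function.Injective (S.mulVec) := Matrix.mulVec_injective_iff_isUnit.mpr hSunit
    -- transpose relation
    have hMQ : ∀ w : PS n, (M *ᵥ w) ⬝ᵥ w = (Q *ᵥ (S *ᵥ w)) ⬝ᵥ (S *ᵥ w) := by
      intro w
      calc (M *ᵥ w) ⬝ᵥ w = w ⬝ᵥ (Sᵀ *ᵥ (Q *ᵥ (S *ᵥ w))) := by
            rw [dotProduct_comm, hM, ← Matrix.mulVec_mulVec, ← Matrix.mulVec_mulVec]
      _ = (w ᵥ* Sᵀ) ⬝ᵥ (Q *ᵥ (S *ᵥ w)) := Matrix.dotProduct_mulVec _ _ _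
      _ = (S *ᵥ w) ⬝ᵥ (Q *ᵥ (S *ᵥ w)) := by rw [Matrix.vecMul_transpose]
      _ = (Q *ᵥ (S *ᵥ w)) ⬝ᵥ (S *ᵥ w) := dotProduct_comm _ _
    -- M is positive definite
    have hMpos : M.PosDef := by
      refine Matrix.PosDef.of_dotProduct_mulVec_pos ?_ ?_
      · show Mᴴ = M
        have hQh : Qᵀ = Q := by
          rw [← Matrix.conjTranspose_eq_transpose_of_trivial]
          exact hQ.1
        rw [Matrix.conjTranspose_eq_transpose_of_trivial, hM, Matrix.transpose_mul,
          Matrix.transpose_mul, Matrix.transpose_transpose, hQh, Matrix.mul_assoc]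
      · intro x hx
        have hx' : S *ᵥ x ≠ 0 := by
          intro hcon
          apply hx
          apply hSinj
          rw [hcon, Matrix.mulVec_zero]
        have hpos := hQ.dotProduct_mulVec_pos hx'
        have : (0:ℝ) < (S *ᵥ x) ⬝ᵥ (Q *ᵥ (S *ᵥ x)) := by simpa using hpos
        have h2 : (0:ℝ) < (M *ᵥ x) ⬝ᵥ x := by
          rw [hMQ x, dotProduct_comm]
          exact this
        simpa [dotProduct_comm] using h2
    -- box bound
    have hbox : ∀ w : PS n, (M *ᵥ w) ⬝ᵥ w ≤ ℏ →
        (∑ i, (w (Sum.inl i))^2 ≤ ℏ ∧ ∑ j, (w (Sum.inr j))^2 ≤ ℏ) := by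
      intro w hw
      have hzK : S *ᵥ w ∈ Xl + lagDual n ℏ ℓ' Xl := by
        apply hsub
        show Q *ᵥ (S *ᵥ w) ⬝ᵥ (S *ᵥ w) ≤ ℏ
        rw [← hMQ w]
        exact hw
      obtain ⟨a, ha, b, hb, hab⟩ := Set.mem_add.mp hzK
      obtain ⟨y, hy, rfl⟩ := hXdesc a ha
      -- b in terms of the basis f
      have hbℓ' : b ∈ ℓ' := hb.1
      set p : Fin n → ℝ := fun j => f.repr ⟨b, hbℓ'⟩ j with hp
      have hbcoe : b = ∑ j, p j • F j := by
        rw [← hcoeF]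
        conv_lhs => rw [show b = ((⟨b, hbℓ'⟩ : ℓ') : PS n) from rfl]
        congr 1
        exact (f.sum_repr ⟨b, hbℓ'⟩).symm
      -- identify w
      have hw_eq : w = Sum.elim y p := by
        apply hSinj
        rw [hmulVec (Sum.elim y p)]
        simp only [Sum.elim_inl, Sum.elim_inr]
        rw [← hab, hbcoe]
      -- second bound: sum of p squares
      have hp2 : ∑ j, (p j)^2 ≤ ℏ := by
        set P := ∑ j, (p j)^2 with hP
        have hP0 : 0 ≤ P := Finset.sum_nonneg fun j _ => sq_nonneg _
        rcases eq_or_lt_of_le hP0 with hP0' | hPpos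
        · rw [← hP0']; exact hℏ.le
        · set c : ℝ := Real.sqrt ℏ / Real.sqrt P with hc
          have hsP : Real.sqrt P * Real.sqrt P = P := Real.mul_self_sqrt hP0
          have hsPpos : 0 < Real.sqrt P := Real.sqrt_pos.mpr hPpos
          have hyP : ∑ i, ((-c) * p i)^2 ≤ ℏ := by
            have : ∑ i, ((-c) * p i)^2 = c^2 * P := by
              rw [hP, Finset.mul_sum]
              exact Finset.sum_congr rfl fun i _ => by ring
            rw [this, hc, div_pow, Real.sq_sqrt hℏ.le, Real.sq_sqrt hP0]
            rw [div_mul_cancel₀ _ (ne_of_gt hPpos)]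
          have hdual := hb.2 _ (hXmem (fun i => (-c) * p i) hyP)
          rw [hbcoe, symp_sum_sum E F hEF] at hdual
          have hsum : - ∑ i, ((-c) * p i) * p i = c * P := by
            rw [hP, Finset.mul_sum, ← Finset.sum_neg_distrib]
            exact Finset.sum_congr rfl fun i _ => by ring
          rw [hsum] at hdual
          -- c * P = √ℏ √P ≤ ℏ = √ℏ √ℏ  ⟹  √P ≤ √ℏ
          have hcP : c * P = Real.sqrt ℏ * Real.sqrt P := by
            rw [hc]
            field_simp
            rw [Real.sq_sqrt hP0]
          have hhh : Real.sqrt ℏ * Real.sqrt ℏ = ℏ := Real.mul_self_sqrt hℏ.le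
          have hsqrtle : Real.sqrt P ≤ Real.sqrt ℏ := by
            have hsh : 0 < Real.sqrt ℏ := Real.sqrt_pos.mpr hℏ
            nlinarith [hdual, hcP, hhh]
          nlinarith [hsqrtle, hsP, hhh, hsPpos]
      constructor
      · have : ∀ i, w (Sum.inl i) = y i := fun i => by rw [hw_eq]; rfl
        calc ∑ i, (w (Sum.inl i))^2 = ∑ i, (y i)^2 :=
              Finset.sum_congr rfl fun i _ => by rw [this i]
        _ ≤ ℏ := hy
      · have : ∀ j, w (Sum.inr j) = p j := fun j => by rw [hw_eq]; rfl
        calc ∑ j, (w (Sum.inr j))^2 = ∑ j, (p j)^2 :=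
              Finset.sum_congr rfl fun j _ => by rw [this j]
        _ ≤ ℏ := hp2
    -- inverse and diagonal bound
    have hMunit : IsUnit M.det := hMpos.isUnit |> (Matrix.isUnit_iff_isUnit_det _).mp
    have hMN : M * M⁻¹ = 1 := Matrix.mul_nonsing_inv M hMunit
    have hNpos : M⁻¹.PosDef := hMpos.inv
    have hdiag : ∀ k, M⁻¹ k k ≤ 1 := by
      intro k
      have hNkk : 0 < M⁻¹ k k := by
        have h1 := hNpos.dotProduct_mulVec_pos (x := Pi.single k 1) (by
          intro hcon
          have := congrFun hcon k
          simp at this)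
        simpa [single_dotProduct, dotProduct_single] using h1
      set c : ℝ := Real.sqrt ℏ / Real.sqrt (M⁻¹ k k) with hc
      set w : PS n := c • (M⁻¹ *ᵥ Pi.single k 1) with hwdef
      have hMNk : M *ᵥ (M⁻¹ *ᵥ Pi.single k 1) = Pi.single k 1 := by
        rw [Matrix.mulVec_mulVec, hMN, Matrix.one_mulVec]
      have hNdot : (Pi.single k 1 : PS n) ⬝ᵥ (M⁻¹ *ᵥ Pi.single k 1) = M⁻¹ k k := by
        simp [single_dotProduct, Matrix.mulVec_single]
      have hc2 : c^2 = ℏ / M⁻¹ k k := by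
        rw [hc, div_pow, Real.sq_sqrt hℏ.le, Real.sq_sqrt hNkk.le]
      have hMw : (M *ᵥ w) ⬝ᵥ w ≤ ℏ := by
        have : (M *ᵥ w) ⬝ᵥ w = c^2 * (M⁻¹ k k) := by
          rw [hwdef, Matrix.mulVec_smul, smul_dotProduct, dotProduct_smul,
            hMNk, hNdot, smul_eq_mul, smul_eq_mul]
          ring
        rw [this, hc2, div_mul_cancel₀ _ (ne_of_gt hNkk)]
      have hwk : w k = c * M⁻¹ k k := by
        rw [hwdef]
        simp [Matrix.mulVec_single]
      have hbk := hbox w hMw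
      have hwk2 : (w k)^2 ≤ ℏ := by
        cases k with
        | inl i =>
          refine le_trans ?_ hbk.1
          exact Finset.single_le_sum (fun i' (_ : i' ∈ Finset.univ) =>
            sq_nonneg (w (Sum.inl i'))) (Finset.mem_univ i)
        | inr j =>
          refine le_trans ?_ hbk.2
          exact Finset.single_le_sum (fun j' (_ : j' ∈ Finset.univ) =>
            sq_nonneg (w (Sum.inr j'))) (Finset.mem_univ j)
      rw [hwk] at hwk2
      have hfin : ℏ * (M⁻¹ k k) ≤ ℏ := by
        have : (c * M⁻¹ k k)^2 = ℏ * M⁻¹ k k := by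
          rw [mul_pow, hc2, sq, ← mul_assoc, div_mul_cancel₀ ℏ (ne_of_gt hNkk)]
        linarith [this ▸ hwk2]
      exact le_of_mul_le_mul_left (by linarith) hℏ
    have hdetN : M⁻¹.det ≤ 1 := det_le_one_of_diag_le_one M⁻¹ hNpos hdiag
    have hdetM : 1 ≤ M.det := by
      have h1 : M.det * M⁻¹.det = 1 := by rw [← Matrix.det_mul, hMN, Matrix.det_one]
      have hNdetpos : 0 < M⁻¹.det := hNpos.det_pos
      nlinarith
    have hdetQ : 1 ≤ Q.det := by
      have h2 : M.det = S.det * Q.det * S.det := by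
        rw [hM, Matrix.det_mul, Matrix.det_mul, Matrix.det_transpose]
      nlinarith [hdetS, hdetM]
    exact volume_ellipsoid_le ℏ Q hQ hdetQ
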